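/- If φ ∈ L^∞(𝕋) is not in H^∞, then φ is of bounded type (a quotient of two H^∞ functions) if and only if the Hankel operator H_φ has nontrivial kernel. -/

import Mathlib

open MeasureTheory Complex Submodule
noncomputable section
instance fact2pi : Fact (0 < 2 * Real.pi) := ⟨by positivity⟩
instance factTop1 : Fact ((1:ENNReal) ≤ (⊤:ENNReal)) := ⟨le_top⟩
/-- the circle group -/
abbrev Tc := AddCircle (2 * Real.pi)
/-- normalized Haar measure on the circle -/
abbrev muh : Measure Tc := AddCircle.haarAddCircle
/-- L² of the circle -/
abbrev L2 := Lp ℂ 2 muh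
/-- L^∞ of the circle -/
abbrev Linf := Lp ℂ ⊤ muh

/-- The Hardy space `H²` as a closed subspace of `L²` of the circle. -/
def H2 : Submodule ℂ L2 :=
  (span ℂ (Set.range fun n : ℕ => (fourierLp 2 (n : ℤ) : L2))).topologicalClosure

theorem isClosed_H2 : IsClosed (H2 : Set L2) := Submodule.isClosed_topologicalClosure _
instance : CompleteSpace H2 := IsClosed.completeSpace_coe (hs := isClosed_H2)

theorem memLp2_mul (φ : Linf) (g : L2) :
    MemLp ((φ : Tc → ℂ) • (g : Tc → ℂ)) 2 muh :=
  MemLp.smul (Lp.memLp g) (Lp.memLp φ)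

/-- multiplication of an `L∞` function and an `L²` function, as an element of `L²`. -/
def mulL2 (φ : Linf) (g : L2) : L2 := (memLp2_mul φ g).toLp _

theorem mulL2_add (φ : Linf) (g h : L2) : mulL2 φ (g + h) = mulL2 φ g + mulL2 φ h := by
  simp only [mulL2]
  rw [← MemLp.toLp_add]
  apply MemLp.toLp_congr
  filter_upwards [Lp.coeFn_add g h] with x hx
  simp only [Pi.mul_apply, Pi.smul_apply, smul_eq_mul, hx, Pi.add_apply]
  ring

theorem mulL2_smul (φ : Linf) (c : ℂ) (g : L2) : mulL2 φ (c • g) = c • mulL2 φ g := by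
  simp only [mulL2]
  rw [← MemLp.toLp_const_smul]
  apply MemLp.toLp_congr
  filter_upwards [Lp.coeFn_smul c g] with x hx
  simp only [Pi.mul_apply, Pi.smul_apply, smul_eq_mul, hx]
  ring

theorem mulL2_norm (φ : Linf) (g : L2) : ‖mulL2 φ g‖ ≤ ‖φ‖ * ‖g‖ := by
  rw [mulL2, Lp.norm_toLp]
  have h := eLpNorm_le_eLpNorm_top_mul_eLpNorm 2 (φ : Tc → ℂ) (Lp.aestronglyMeasurable g)
      (fun a b => a * b) 1 (Filter.Eventually.of_forall fun x => by simp)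
  calc (eLpNorm ((φ : Tc → ℂ) • (g : Tc → ℂ)) 2 muh).toReal
      ≤ (eLpNorm (φ : Tc → ℂ) ⊤ muh * eLpNorm (g : Tc → ℂ) 2 muh).toReal := by
        apply ENNReal.toReal_mono
        · exact ENNReal.mul_ne_top (Lp.eLpNorm_ne_top φ) (Lp.eLpNorm_ne_top g)
        · rw [ENNReal.coe_one, one_mul] at h
          exact h
    _ = ‖φ‖ * ‖g‖ := by
        rw [ENNReal.toReal_mul, Lp.norm_def, Lp.norm_def]

/-- Multiplication by an `L^∞` function as a continuous linear operator on `L²`. -/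
def Mmul (φ : Linf) : L2 →L[ℂ] L2 :=
  LinearMap.mkContinuous
    { toFun := mulL2 φ
      map_add' := mulL2_add φ
      map_smul' := mulL2_smul φ } ‖φ‖ (mulL2_norm φ)

/-- the orthogonal projection `P : L² → H²`. -/
abbrev P2 : L2 →L[ℂ] ↥H2 := orthogonalProjection H2

/-- The Toeplitz operator with symbol `φ ∈ L^∞`, acting on `H²`: `T_φ g = P (φ g)`. -/
def Toep (φ : Linf) : ↥H2 →L[ℂ] ↥H2 := P2 ∘L (Mmul φ) ∘L H2.subtypeL

/-- The Toeplitz operator, viewed as a map `L² → L²` (useful to avoid coercions). -/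
def TopL (φ : Linf) : L2 →L[ℂ] L2 := H2.subtypeL ∘L P2 ∘L Mmul φ

theorem memLpTop_mul (φ ψ : Linf) : MemLp ((φ : Tc → ℂ) • (ψ : Tc → ℂ)) ⊤ muh :=
  MemLp.smul (Lp.memLp ψ) (Lp.memLp φ)

/-- `L^∞` is closed under products; we register this as a `Mul` instance. -/
instance : Mul Linf := ⟨fun φ ψ => (memLpTop_mul φ ψ).toLp _⟩

/-- the constant function `1` in `L^∞`. -/
instance : One Linf := ⟨(memLp_top_const (1 : ℂ)).toLp _⟩

/-- the embedding of `L^∞` into `L²` (the measure is finite). -/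
def toL2 (φ : Linf) : L2 := ((Lp.memLp φ).mono_exponent le_top).toLp _

/-- `H^∞`: the essentially bounded functions lying in the Hardy space. -/
def Hinf : Set Linf := {φ | toL2 φ ∈ H2}

/-- pointwise complex conjugation on `L²`. -/
def conjL2 (f : L2) : L2 :=
  ((Complex.conjCLE.toContinuousLinearMap).comp_memLp' (Lp.memLp f)).toLp _

/-- pointwise complex conjugation on `L^∞`. -/
def conjLinf (φ : Linf) : Linf :=
  ((Complex.conjCLE.toContinuousLinearMap).comp_memLp' (Lp.memLp φ)).toLp _

/-- composition with `z ↦ z⁻¹` (i.e. `x ↦ -x` on the additive circle) on `L²`. -/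
def compNegL2 : L2 →ₗᵢ[ℂ] L2 :=
  Lp.compMeasurePreservingₗᵢ ℂ (fun x : Tc => -x) (Measure.measurePreserving_neg muh)

/-- composition with `z ↦ z⁻¹` on `L^∞`. -/
def compNegLinf (φ : Linf) : Linf :=
  Lp.compMeasurePreserving (fun x : Tc => -x) (Measure.measurePreserving_neg muh) φ

/-- `φ̃(z) = conj (φ (z̄))`. -/
def tildeL (φ : Linf) : Linf := conjLinf (compNegLinf φ)

/-- `f̃(z) = conj (f (z̄))` on `L²`. -/
def tilde2 (f : L2) : L2 := conjL2 (compNegL2 f)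

/-- the unitary `J` on `L²`: `(J f)(z) = z̄ f(z̄)`. -/
def Jop : L2 →L[ℂ] L2 := (Mmul (fourierLp ⊤ (-1))) ∘L compNegL2.toContinuousLinearMap

/-- the projection onto `(H²)^⊥`. -/
def PperpL : L2 →L[ℂ] L2 := ContinuousLinearMap.id ℂ L2 - H2.subtypeL ∘L P2

/-- The Hankel operator with symbol `φ`: `H_φ g = J P^⊥ (φ g)`. -/
def Hank (φ : Linf) : ↥H2 →L[ℂ] L2 := Jop ∘L PperpL ∘L (Mmul φ) ∘L H2.subtypeL

/-- the self-commutator `[T^*, T] = T^*T - TT^*`. -/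
def selfCommOp {H : Type*} [NormedAddCommGroup H] [InnerProductSpace ℂ H] [CompleteSpace H]
    (T : H →L[ℂ] H) : H →L[ℂ] H :=
  ContinuousLinearMap.adjoint T ∘L T - T ∘L ContinuousLinearMap.adjoint T

/-- hyponormality of a Hilbert-space operator. -/
def IsHyponormalOp {H : Type*} [NormedAddCommGroup H] [InnerProductSpace ℂ H] [CompleteSpace H]
    (T : H →L[ℂ] H) : Prop := (selfCommOp T).IsPositive

/-- normality of a Hilbert-space operator. -/
def IsNormalOp {H : Type*} [NormedAddCommGroup H] [InnerProductSpace ℂ H] [CompleteSpace H]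
    (T : H →L[ℂ] H) : Prop := selfCommOp T = 0

/-- finite rank operator. -/
def FiniteRankOp {H : Type*} [NormedAddCommGroup H] [InnerProductSpace ℂ H]
    (T : H →L[ℂ] H) : Prop := FiniteDimensional ℂ ↥(LinearMap.range (T : H →ₗ[ℂ] H))

/-- `φ` is of bounded type: a quotient of two `H^∞` functions. -/
def BoundedType (φ : Linf) : Prop :=
  ∃ ψ₁ ψ₂ : Linf, ψ₁ ∈ Hinf ∧ ψ₂ ∈ Hinf ∧ (∀ᵐ x ∂muh, (ψ₂ : Tc → ℂ) x ≠ 0) ∧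
    (∀ᵐ x ∂muh, (φ : Tc → ℂ) x = (ψ₁ : Tc → ℂ) x / (ψ₂ : Tc → ℂ) x)

/-- scalar inner function. -/
def IsInner (θ : Linf) : Prop := θ ∈ Hinf ∧ ∀ᵐ x ∂muh, ‖(θ : Tc → ℂ) x‖ = 1

/-- constant function in `L^∞`. -/
def IsConstLinf (θ : Linf) : Prop := ∃ c : ℂ, θ = c • (1 : Linf)

/-- the boundary function `z = e^{ix}` on the circle. -/
def zfun : Tc → ℂ := fun x => fourier 1 x

/-- finite Blaschke product. -/
def IsFiniteBlaschke (θ : Linf) : Prop :=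
  ∃ (c : ℂ) (N : ℕ) (α : Fin N → ℂ), ‖c‖ = 1 ∧ (∀ i, ‖α i‖ < 1) ∧
    ∀ᵐ x ∂muh, (θ : Tc → ℂ) x =
      c * ∏ i, (zfun x - α i) / (1 - (starRingEnd ℂ (α i)) * zfun x)

/-- divisibility of inner functions: `θ` divides `θ'`. -/
def InnerDivides (θ θ' : Linf) : Prop := ∃ ω : Linf, IsInner ω ∧ θ' = θ * ω

/-- evaluation of an `H²` function inside the disk, via its Taylor (Fourier) coefficients. -/
def evalDisk (f : L2) (α : ℂ) : ℂ := ∑' k : ℕ, fourierCoeff (f : Tc → ℂ) (k : ℤ) * α ^ k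

/-- the model space `H_θ = H² ⊖ θH²`. -/
def ModelSpace (θ : Linf) : Submodule ℂ L2 := H2 ⊓ (Submodule.map (Mmul θ : L2 →ₗ[ℂ] L2) H2)ᗮ

/-- outer function: the closed span of its (analytic) polynomial multiples is all of `H²`. -/
def IsOuter (h : L2) : Prop :=
  (span ℂ (Set.range fun n : ℕ => mulL2 (fourierLp ⊤ (n : ℤ)) h)).topologicalClosure = H2

/-- `h` coincides with an `H^∞` function which is invertible in `H^∞`. -/
def InvertibleHinf (h : L2) : Prop :=
  ∃ u v : Linf, toL2 u = h ∧ u ∈ Hinf ∧ v ∈ Hinf ∧ u * v = 1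

/-- the set `E(φ)` appearing in Cowen's hyponormality criterion. -/
def Ecal (φ : Linf) : Set Linf :=
  {k | k ∈ Hinf ∧ ‖k‖ ≤ 1 ∧ φ - k * conjLinf φ ∈ Hinf}

theorem isClosed_modelSpace (θ : Linf) : IsClosed ((ModelSpace θ : Set L2)) := by
  rw [ModelSpace, Submodule.coe_inf]
  exact isClosed_H2.inter (Submodule.isClosed_orthogonal _)

instance (θ : Linf) : CompleteSpace (ModelSpace θ) :=
  IsClosed.completeSpace_coe (hs := isClosed_modelSpace θ)

/-- the orthogonal projection of `L²` onto the model space `H_θ`, as an endomorphism of `L²`. -/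
def Pmodel (θ : Linf) : L2 →L[ℂ] L2 :=
  (ModelSpace θ).subtypeL ∘L orthogonalProjection (ModelSpace θ)



open scoped InnerProductSpace ComplexConjugate

namespace HankAux

/-- exponential monomial in `L^∞`. -/
def eL (n : ℤ) : Linf := fourierLp ⊤ n

theorem coeFn_eL (n : ℤ) : (eL n : Tc → ℂ) =ᵐ[muh] fourier n := coeFn_fourierLp ⊤ n

theorem Mmul_def (φ : Linf) (g : L2) : Mmul φ g = mulL2 φ g := rfl

theorem coeFn_Mmul (φ : Linf) (g : L2) :
    (Mmul φ g : Tc → ℂ) =ᵐ[muh] fun x => (φ : Tc → ℂ) x * (g : Tc → ℂ) x := by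
  rw [Mmul_def, mulL2]
  filter_upwards [(memLp2_mul φ g).coeFn_toLp] with x hx
  simpa using hx

theorem coeFn_toL2 (φ : Linf) : (toL2 φ : Tc → ℂ) =ᵐ[muh] (φ : Tc → ℂ) :=
  MemLp.coeFn_toLp _

theorem inner_L2 (f g : L2) :
    ⟪f, g⟫_ℂ = ∫ x, conj ((f : Tc → ℂ) x) * (g : Tc → ℂ) x ∂muh := by
  rw [MeasureTheory.L2.inner_def]
  simp_rw [RCLike.inner_apply']

theorem norm_fourier (n : ℤ) (x : Tc) : ‖fourier n x‖ = 1 := by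
  simp [fourier_apply, Circle.norm_coe]

theorem Mmul_eL_Mmul (m n : ℤ) (f : L2) :
    Mmul (eL m) (Mmul (eL n) f) = Mmul (eL (m + n)) f := by
  apply Lp.ext
  filter_upwards [coeFn_Mmul (eL m) (Mmul (eL n) f), coeFn_Mmul (eL n) f,
    coeFn_Mmul (eL (m + n)) f, coeFn_eL m, coeFn_eL n, coeFn_eL (m + n)]
    with x h1 h2 h3 h4 h5 h6
  rw [h1, h2, h3, h4, h5, h6, fourier_add]
  ring

theorem Mmul_eL_zero (f : L2) : Mmul (eL 0) f = f := by
  apply Lp.ext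
  filter_upwards [coeFn_Mmul (eL 0) f, coeFn_eL 0] with x h1 h2
  rw [h1, h2, fourier_zero, one_mul]

theorem fourierLp_mem_H2 (n : ℕ) : (fourierLp 2 (n : ℤ) : L2) ∈ H2 :=
  Submodule.le_topologicalClosure _ (Submodule.subset_span ⟨n, rfl⟩)

theorem orthotest {j n : ℤ} (h : j ≠ n) : ⟪(fourierLp 2 j : L2), (fourierLp 2 n : L2)⟫_ℂ = 0 :=
  orthonormal_fourier.2 h

theorem inner_fourierLp_eq_zero_of_mem_H2 {f : L2} (hf : f ∈ H2) {j : ℤ} (hj : j < 0) :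
    ⟪(fourierLp 2 j : L2), f⟫_ℂ = 0 := by
  have hle : H2 ≤ LinearMap.ker (innerSL ℂ (fourierLp 2 j : L2) : L2 →ₗ[ℂ] ℂ) := by
    apply Submodule.topologicalClosure_minimal
    · rw [Submodule.span_le]
      rintro _ ⟨n, rfl⟩
      rw [SetLike.mem_coe, LinearMap.mem_ker]
      have hne : j ≠ (n : ℤ) := by omega
      exact orthotest hne
    · exact ContinuousLinearMap.isClosed_ker _
  exact hle hf

theorem eq_zero_of_forall_inner_fourier {f : L2}
    (h : ∀ j : ℤ, ⟪(fourierLp 2 j : L2), f⟫_ℂ = 0) : f = 0 := by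
  have h0 : fourierBasis.repr f = 0 := by
    ext j
    have hj := h j
    rw [← congrFun coe_fourierBasis j] at hj
    rw [fourierBasis.repr_apply_apply]
    simpa using hj
  simpa using (map_eq_zero_iff _ (LinearIsometryEquiv.injective _)).mp h0

theorem mem_H2_iff {f : L2} :
    f ∈ H2 ↔ ∀ j : ℤ, j < 0 → ⟪(fourierLp 2 j : L2), f⟫_ℂ = 0 := by
  constructor
  · exact fun hf j hj => inner_fourierLp_eq_zero_of_mem_H2 hf hj
  · intro h
    have hg : f - (P2 f : L2) = 0 := by
      apply eq_zero_of_forall_inner_fourier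
      intro j
      rcases lt_or_ge j 0 with hj | hj
      · rw [inner_sub_right, h j hj,
          inner_fourierLp_eq_zero_of_mem_H2 (SetLike.coe_mem (P2 f)) hj, sub_zero]
      · have hmem : (fourierLp 2 j : L2) ∈ H2 := by
          have : ((j.toNat : ℤ)) = j := Int.toNat_of_nonneg hj
          simpa [this] using fourierLp_mem_H2 j.toNat
        have horth : f - (P2 f : L2) ∈ H2ᗮ := Submodule.sub_starProjection_mem_orthogonal (K := H2) f
        exact (Submodule.mem_orthogonal H2 _).mp horth _ hmem
    have : f = (P2 f : L2) := by rwa [sub_eq_zero] at hg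
    rw [this]
    exact SetLike.coe_mem _

theorem inner_fourierLp_Mmul (m j : ℤ) (f : L2) :
    ⟪(fourierLp 2 j : L2), Mmul (eL m) f⟫_ℂ = ⟪(fourierLp 2 (j - m) : L2), f⟫_ℂ := by
  rw [inner_L2, inner_L2]
  apply integral_congr_ae
  filter_upwards [coeFn_Mmul (eL m) f, coeFn_eL m, coeFn_fourierLp 2 j,
    coeFn_fourierLp 2 (j - m)] with x h1 h2 h3 h4
  rw [h1, h2, h3, h4]
  have hkey : conj (fourier j x) * fourier m x = conj (fourier (j - m) x) := by
    rw [← fourier_neg, ← fourier_neg, ← fourier_add]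
    congr 1
    ring
  calc conj (fourier j x) * (fourier m x * f x)
      = conj (fourier j x) * fourier m x * f x := by ring
    _ = conj (fourier (j - m) x) * f x := by rw [hkey]

theorem Mmul_eL_one_mem_H2 {f : L2} (hf : f ∈ H2) : Mmul (eL 1) f ∈ H2 := by
  rw [mem_H2_iff]
  intro j hj
  rw [inner_fourierLp_Mmul]
  exact mem_H2_iff.mp hf _ (by omega)

/-- the kernel of the Hankel operator, seen inside `L²`. -/
def Kker (φ : Linf) : Submodule ℂ L2 :=
  H2 ⊓ Submodule.comap (Mmul φ : L2 →ₗ[ℂ] L2) H2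

theorem isClosed_Kker (φ : Linf) : IsClosed ((Kker φ : Set L2)) := by
  have hset : (Kker φ : Set L2) = (H2 : Set L2) ∩ (Mmul φ) ⁻¹' (H2 : Set L2) := by
    ext x
    simp [Kker, Submodule.mem_inf, Submodule.mem_comap]
  rw [hset]
  exact isClosed_H2.inter (isClosed_H2.preimage (Mmul φ).continuous)

theorem Mmul_comm (φ ψ : Linf) (f : L2) :
    Mmul φ (Mmul ψ f) = Mmul ψ (Mmul φ f) := by
  apply Lp.ext
  filter_upwards [coeFn_Mmul φ (Mmul ψ f), coeFn_Mmul ψ f, coeFn_Mmul ψ (Mmul φ f),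
    coeFn_Mmul φ f] with x h1 h2 h3 h4
  rw [h1, h2, h3, h4]
  ring

theorem zmem_Kker {φ : Linf} {f : L2} (hf : f ∈ Kker φ) : Mmul (eL 1) f ∈ Kker φ := by
  obtain ⟨h1, h2⟩ := Submodule.mem_inf.mp hf
  rw [Submodule.mem_comap] at h2
  apply Submodule.mem_inf.mpr
  refine ⟨Mmul_eL_one_mem_H2 h1, ?_⟩
  rw [Submodule.mem_comap]
  show Mmul φ (Mmul (eL 1) f) ∈ H2
  rw [Mmul_comm]
  exact Mmul_eL_one_mem_H2 (by simpa using h2)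

/-- the shift as a continuous linear equivalence. -/
def Ush : L2 ≃L[ℂ] L2 :=
  ContinuousLinearEquiv.equivOfInverse (Mmul (eL 1)) (Mmul (eL (-1)))
    (fun f => by
      rw [show (Mmul (eL (-1))) ((Mmul (eL 1)) f) = Mmul (eL (-1)) (Mmul (eL 1) f) from rfl,
        Mmul_eL_Mmul, show (-1 : ℤ) + 1 = 0 by ring, Mmul_eL_zero])
    (fun f => by
      rw [show (Mmul (eL 1)) ((Mmul (eL (-1))) f) = Mmul (eL 1) (Mmul (eL (-1)) f) from rfl,
        Mmul_eL_Mmul, show (1 : ℤ) + (-1) = 0 by ring, Mmul_eL_zero])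

theorem Mmul_eL_nat_mem_Kker {φ : Linf} {f : L2} (hf : f ∈ Kker φ) :
    ∀ n : ℕ, Mmul (eL (n : ℤ)) f ∈ Kker φ := by
  intro n
  induction n with
  | zero => simpa [Mmul_eL_zero] using hf
  | succ n ih =>
    have : Mmul (eL ((n + 1 : ℕ) : ℤ)) f = Mmul (eL 1) (Mmul (eL (n : ℤ)) f) := by
      rw [Mmul_eL_Mmul]
      congr 1
      exact congrArg (fun k => Mmul (eL k)) (by push_cast; ring)
    rw [this]
    exact zmem_Kker ih

theorem exists_theta (φ : Linf) (hK : Kker φ ≠ ⊥) :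
    ∃ θ : L2, θ ∈ Kker φ ∧ θ ≠ 0 ∧ ∀ f ∈ Kker φ, ⟪Mmul (eL 1) f, θ⟫_ℂ = 0 := by
  classical
  set K := Kker φ with hKdef
  set zK : Submodule ℂ L2 := Submodule.map (Mmul (eL 1) : L2 →ₗ[ℂ] L2) K with hzK
  have hzK_le : zK ≤ K := by
    rintro _ ⟨g, hg, rfl⟩
    exact zmem_Kker hg
  have hzK_closed : IsClosed (zK : Set L2) := by
    have hset : (zK : Set L2) = Ush '' (K : Set L2) := by
      ext x
      simp only [hzK, Submodule.map_coe, Set.mem_image]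
      rfl
    rw [hset]
    exact (Ush.toHomeomorph.isClosedMap) _ (isClosed_Kker φ)
  haveI : CompleteSpace ↥zK := hzK_closed.completeSpace_coe
  by_cases hle : K ≤ zK
  · exfalso
    apply hK
    rw [Submodule.eq_bot_iff]
    intro f hf
    have hiter : ∀ n : ℕ, ∀ g ∈ K, ∃ h ∈ H2, g = Mmul (eL (n : ℤ)) h := by
      intro n
      induction n with
      | zero =>
        intro g hg
        exact ⟨g, (Submodule.mem_inf.mp hg).1, by rw [show ((0 : ℕ) : ℤ) = 0 from rfl,
          Mmul_eL_zero]⟩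
      | succ n ih =>
        intro g hg
        obtain ⟨g', hg', rfl⟩ := hle hg
        obtain ⟨h, hh, rfl⟩ := ih g' hg'
        refine ⟨h, hh, ?_⟩
        show Mmul (eL 1) (Mmul (eL (n : ℤ)) h) = _
        rw [Mmul_eL_Mmul]
        congr 2
        push_cast
        ring
    apply eq_zero_of_forall_inner_fourier
    intro j
    obtain ⟨h, hh, rfl⟩ := hiter (j.toNat + 1) f hf
    rw [inner_fourierLp_Mmul]
    exact mem_H2_iff.mp hh _ (by omega)
  · obtain ⟨b, hbK, hbz⟩ := SetLike.not_le_iff_exists.mp hle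
    set θ : L2 := b - (orthogonalProjection zK b : L2) with hθ
    have hθK : θ ∈ K := sub_mem hbK (hzK_le (SetLike.coe_mem _))
    have hθorthset : θ ∈ zKᗮ := Submodule.sub_starProjection_mem_orthogonal (K := zK) b
    refine ⟨θ, hθK, ?_, ?_⟩
    · intro h0
      apply hbz
      have : b = (orthogonalProjection zK b : L2) := by
        rwa [hθ, sub_eq_zero] at h0
      rw [this]
      exact SetLike.coe_mem _
    · intro f hf
      have hmem : Mmul (eL 1) f ∈ zK := ⟨f, hf, rfl⟩
      exact (Submodule.mem_orthogonal zK θ).mp hθorthset _ hmem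

theorem ofReal_max_zero (a : ℝ) : ENNReal.ofReal (max a 0) = ENNReal.ofReal a := by
  rcases le_total a 0 with h | h
  · rw [max_eq_right h, ENNReal.ofReal_zero, eq_comm, ENNReal.ofReal_eq_zero]
    exact h
  · rw [max_eq_left h]

theorem ae_zero_of_forall_contMap (w : Tc → ℝ) (hmeas : Measurable w)
    (hw : Integrable w muh) (h : ∀ f : C(Tc, ℝ), ∫ x, f x * w x ∂muh = 0) :
    ∀ᵐ x ∂muh, w x = 0 := by
  set d₁ : Tc → ENNReal := fun x => ENNReal.ofReal (w x) with hd₁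
  set d₂ : Tc → ENNReal := fun x => ENNReal.ofReal (-w x) with hd₂
  have hm₁ : Measurable d₁ := hmeas.ennreal_ofReal
  have hm₂ : Measurable d₂ := hmeas.neg.ennreal_ofReal
  haveI hf₁ : IsFiniteMeasure (muh.withDensity d₁) :=
    isFiniteMeasure_withDensity_ofReal hw.2
  haveI hf₂ : IsFiniteMeasure (muh.withDensity d₂) :=
    isFiniteMeasure_withDensity_ofReal hw.neg.2
  have key : muh.withDensity d₁ = muh.withDensity d₂ := by
    apply ext_of_forall_lintegral_eq_of_IsFiniteMeasure
    intro f
    have hfc : Continuous fun x : Tc => ((f x : ℝ)) :=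
      NNReal.continuous_coe.comp f.continuous
    set g : C(Tc, ℝ) := ⟨fun x => (f x : ℝ), hfc⟩ with hg
    have hgnn : ∀ x, 0 ≤ g x := fun x => (f x).2
    have hint : ∀ u : Tc → ℝ, Integrable u muh →
        Integrable (fun x => g x * u x) muh := fun u hu =>
      hu.bdd_mul g.continuous.aestronglyMeasurable (Filter.Eventually.of_forall fun x => g.norm_coe_le_norm x)
    have hsplit : ∫ x, g x * max (w x) 0 ∂muh = ∫ x, g x * max (-w x) 0 ∂muh := by
      have h0 := h g
      have hfe : (fun x => g x * w x)
          = fun x => g x * max (w x) 0 - g x * max (-w x) 0 := by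
        funext x
        rw [← mul_sub, max_zero_sub_max_neg_zero_eq_self]
      have hwp : Integrable (fun x => max (w x) 0) muh := hw.pos_part
      have hwn : Integrable (fun x => max (-w x) 0) muh := by simpa using hw.neg.pos_part
      rw [hfe, integral_sub (hint _ hwp) (hint _ hwn)] at h0
      linarith
    have hgm : Measurable fun x : Tc => ((f x : ENNReal)) :=
      f.continuous.measurable.coe_nnreal_ennreal
    have e₁ : ∫⁻ x, (f x : ENNReal) ∂(muh.withDensity d₁)
        = ENNReal.ofReal (∫ x, g x * max (w x) 0 ∂muh) := by
      have hwp : Integrable (fun x => max (w x) 0) muh := hw.pos_part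
      rw [lintegral_withDensity_eq_lintegral_mul muh hm₁ hgm,
        ofReal_integral_eq_lintegral_ofReal (hint _ hwp)
          (Filter.Eventually.of_forall fun x => mul_nonneg (hgnn x) (le_max_right _ _))]
      apply lintegral_congr
      intro x
      have h1 : (d₁ * fun y => ((f y : ENNReal))) x
          = ENNReal.ofReal (w x) * ENNReal.ofReal (g x) := by
        simp only [Pi.mul_apply, hd₁]
        congr 1
        exact (ENNReal.ofReal_coe_nnreal (p := f x)).symm
      rw [h1, ENNReal.ofReal_mul (hgnn x), ofReal_max_zero, mul_comm]
    have e₂ : ∫⁻ x, (f x : ENNReal) ∂(muh.withDensity d₂)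
        = ENNReal.ofReal (∫ x, g x * max (-w x) 0 ∂muh) := by
      have hwn : Integrable (fun x => max (-w x) 0) muh := by simpa using hw.neg.pos_part
      rw [lintegral_withDensity_eq_lintegral_mul muh hm₂ hgm,
        ofReal_integral_eq_lintegral_ofReal (hint _ hwn)
          (Filter.Eventually.of_forall fun x => mul_nonneg (hgnn x) (le_max_right _ _))]
      apply lintegral_congr
      intro x
      have h1 : (d₂ * fun y => ((f y : ENNReal))) x
          = ENNReal.ofReal (-w x) * ENNReal.ofReal (g x) := by
        simp only [Pi.mul_apply, hd₂]
        congr 1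
        exact (ENNReal.ofReal_coe_nnreal (p := f x)).symm
      rw [h1, ENNReal.ofReal_mul (hgnn x), ofReal_max_zero, mul_comm]
    rw [e₁, e₂, hsplit]
  have hae := (withDensity_eq_iff_of_sigmaFinite hm₁.aemeasurable hm₂.aemeasurable).mp key
  filter_upwards [hae] with x hx
  simp only [hd₁, hd₂] at hx
  rcases lt_trichotomy (w x) 0 with hlt | heq | hgt
  · exfalso
    rw [ENNReal.ofReal_eq_zero.mpr hlt.le] at hx
    exact (ENNReal.ofReal_pos.mpr (by linarith)).ne' hx.symm
  · exact heq
  · exfalso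
    rw [ENNReal.ofReal_eq_zero.mpr (by linarith : -w x ≤ 0)] at hx
    exact (ENNReal.ofReal_pos.mpr hgt).ne' hx

theorem PperpL_eq_zero_iff (x : L2) : PperpL x = 0 ↔ x ∈ H2 := by
  have happ : PperpL x = x - (P2 x : L2) := by
    simp [PperpL, ContinuousLinearMap.sub_apply]
  rw [happ, sub_eq_zero]
  constructor
  · intro h
    rw [h]
    exact SetLike.coe_mem _
  · intro h
    have := orthogonalProjection_mem_subspace_eq_self (⟨x, h⟩ : ↥H2)
    rw [show ((⟨x, h⟩ : ↥H2) : L2) = x from rfl] at this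
    rw [this]

theorem Jop_eq_zero_iff (x : L2) : Jop x = 0 ↔ x = 0 := by
  constructor
  · intro h
    have h1 : Mmul (eL (-1)) (compNegL2 x) = 0 := h
    have h2 : Mmul (eL 1) (Mmul (eL (-1)) (compNegL2 x)) = 0 := by rw [h1]; simp
    rw [Mmul_eL_Mmul, show (1 : ℤ) + (-1) = 0 by ring, Mmul_eL_zero] at h2
    exact compNegL2.injective (by simpa using h2)
  · rintro rfl
    simp

theorem integrable_fourier (n : ℤ) : Integrable (fun x => fourier n x) muh := by
  simpa using (integrable_const (1 : ℂ)).bdd_mul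
    (map_continuous (fourier n)).aestronglyMeasurable (Filter.Eventually.of_forall fun x => le_of_eq (norm_fourier n x))

theorem integral_fourier_eq_zero {n : ℤ} (hn : n ≠ 0) : ∫ x, fourier n x ∂muh = 0 := by
  have h := orthotest (j := 0) (n := n) fun h => hn h.symm
  rw [inner_L2] at h
  rw [← h]
  apply integral_congr_ae
  filter_upwards [coeFn_fourierLp 2 0, coeFn_fourierLp 2 n] with x h1 h2
  rw [h1, h2, fourier_zero]
  simp

theorem exists_psi (φ : Linf) (hK : Kker φ ≠ ⊥) : BoundedType φ := by
  obtain ⟨θ, hθK, hθ0, hθorth⟩ := exists_theta φ hK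
  set c : ℝ := ‖θ‖ ^ 2 with hc
  have hcpos : 0 < c := by
    have hn := norm_pos_iff.mpr hθ0
    positivity
  have hpos : ∀ n : ℕ, ⟪Mmul (eL ((n + 1 : ℕ) : ℤ)) θ, θ⟫_ℂ = 0 := by
    intro n
    have h1 : Mmul (eL ((n + 1 : ℕ) : ℤ)) θ = Mmul (eL 1) (Mmul (eL (n : ℤ)) θ) := by
      rw [Mmul_eL_Mmul]
      congr 1
      exact congrArg (fun k => Mmul (eL k)) (by push_cast; ring)
    rw [h1]
    exact hθorth _ (Mmul_eL_nat_mem_Kker hθK n)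
  have hIntPos : ∀ n : ℤ, 0 < n →
      ∫ x, fourier n x * (conj ((θ : Tc → ℂ) x) * (θ : Tc → ℂ) x) ∂muh = 0 := by
    intro n hn
    lift n to ℕ using hn.le with m
    obtain ⟨k, rfl⟩ : ∃ k : ℕ, m = k + 1 := ⟨m - 1, by omega⟩
    have h2 : ⟪θ, Mmul (eL ((k + 1 : ℕ) : ℤ)) θ⟫_ℂ = 0 := by
      rw [← inner_conj_symm, hpos k, map_zero]
    rw [inner_L2] at h2
    rw [← h2]
    apply integral_congr_ae
    filter_upwards [coeFn_Mmul (eL ((k + 1 : ℕ) : ℤ)) θ, coeFn_eL ((k + 1 : ℕ) : ℤ)]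
      with x h3 h4
    rw [h3, h4]
    ring
  have hInt : ∀ n : ℤ, n ≠ 0 →
      ∫ x, fourier n x * (conj ((θ : Tc → ℂ) x) * (θ : Tc → ℂ) x) ∂muh = 0 := by
    intro n hn
    rcases lt_or_gt_of_ne hn with hlt | hgt
    · have hco : (fun x => fourier n x * (conj ((θ : Tc → ℂ) x) * (θ : Tc → ℂ) x))
          = fun x => conj (fourier (-n) x * (conj ((θ : Tc → ℂ) x) * (θ : Tc → ℂ) x)) := by
        funext x
        rw [map_mul, map_mul, conj_conj, ← fourier_neg, neg_neg]
        ring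
      rw [hco, integral_conj, hIntPos (-n) (by omega), map_zero]
    · exact hIntPos n hgt
  set w : Tc → ℝ := fun x => ‖(θ : Tc → ℂ) x‖ ^ 2 - c with hwdef
  have hvw : ∀ z : ℂ, conj z * z = ((‖z‖ ^ 2 : ℝ) : ℂ) := by
    intro z
    rw [RCLike.conj_mul]
    norm_cast
  have hv : Integrable (fun x => conj ((θ : Tc → ℂ) x) * (θ : Tc → ℂ) x) muh := by
    have h := MeasureTheory.L2.integrable_inner (𝕜 := ℂ) θ θ
    exact h.congr (Filter.Eventually.of_forall fun x => by simp only [RCLike.inner_apply'])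
  have hw2 : Integrable (fun x => ‖(θ : Tc → ℂ) x‖ ^ 2) muh := by
    refine hv.re.congr (Filter.Eventually.of_forall fun x => ?_)
    simp only []
    rw [hvw]
    simp [← Complex.ofReal_pow]
  have hw : Integrable w muh := hw2.sub (integrable_const c)
  have hwm : Measurable w := by
    have h : Measurable fun x => ‖(θ : Tc → ℂ) x‖ :=
      (Lp.stronglyMeasurable θ).measurable.norm
    exact (h.pow_const 2).sub measurable_const
  have hintc : ∫ x, conj ((θ : Tc → ℂ) x) * (θ : Tc → ℂ) x ∂muh = (c : ℂ) := by
    rw [← inner_L2, inner_self_eq_norm_sq_to_K, hc]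
    norm_cast
  have hF : ∀ n : ℤ, ∫ x, fourier n x * ((w x : ℝ) : ℂ) ∂muh = 0 := by
    intro n
    have hsplit : (fun x => fourier n x * ((w x : ℝ) : ℂ))
        = fun x => fourier n x * (conj ((θ : Tc → ℂ) x) * (θ : Tc → ℂ) x)
          - (c : ℂ) * fourier n x := by
      funext x
      rw [hvw]
      simp only [hwdef]
      push_cast
      ring
    have hi1 : Integrable (fun x => fourier n x * (conj ((θ : Tc → ℂ) x) * (θ : Tc → ℂ) x)) muh :=
      hv.bdd_mul (map_continuous (fourier n)).aestronglyMeasurable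
        (Filter.Eventually.of_forall fun x => le_of_eq (norm_fourier n x))
    have hi2 : Integrable (fun x => (c : ℂ) * fourier n x) muh :=
      (integrable_fourier n).const_mul _
    rw [hsplit, integral_sub hi1 hi2]
    rcases eq_or_ne n 0 with rfl | hn
    · simp only [fourier_zero, one_mul, mul_one]
      rw [hintc, integral_const]
      simp
    · rw [hInt n hn, integral_const_mul, integral_fourier_eq_zero hn, mul_zero, sub_zero]
  set v : Tc → ℂ := fun x => ((w x : ℝ) : ℂ) with hvdef
  have hvint : Integrable v muh := hw.ofReal
  have hbnd : ∀ f : C(Tc, ℂ), Integrable (fun x => f x * v x) muh := fun f =>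
    hvint.bdd_mul f.continuous.aestronglyMeasurable (Filter.Eventually.of_forall fun x => f.norm_coe_le_norm x)
  set Lraw : C(Tc, ℂ) →ₗ[ℂ] ℂ :=
    { toFun := fun f => ∫ x, f x * v x ∂muh
      map_add' := fun f g => by
        simp only [ContinuousMap.add_apply]
        rw [← integral_add (hbnd f) (hbnd g)]
        apply integral_congr_ae
        exact Filter.Eventually.of_forall fun x => by ring
      map_smul' := fun a f => by
        simp only [ContinuousMap.smul_apply, smul_eq_mul, RingHom.id_apply]
        rw [← integral_const_mul]
        apply integral_congr_ae
        exact Filter.Eventually.of_forall fun x => by ring } with hLraw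
  have hLbound : ∀ f : C(Tc, ℂ), ‖Lraw f‖ ≤ (∫ x, ‖v x‖ ∂muh) * ‖f‖ := by
    intro f
    have hstep : ∫ x, ‖f x * v x‖ ∂muh ≤ ∫ x, ‖f‖ * ‖v x‖ ∂muh := by
      apply integral_mono (hbnd f).norm (hvint.norm.const_mul _)
      intro x
      simp only [norm_mul]
      exact mul_le_mul_of_nonneg_right (f.norm_coe_le_norm x) (norm_nonneg _)
    calc ‖Lraw f‖ ≤ ∫ x, ‖f x * v x‖ ∂muh := norm_integral_le_integral_norm _
      _ ≤ ∫ x, ‖f‖ * ‖v x‖ ∂muh := hstep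
      _ = (∫ x, ‖v x‖ ∂muh) * ‖f‖ := by rw [integral_const_mul, mul_comm]
  set Lc : C(Tc, ℂ) →L[ℂ] ℂ := LinearMap.mkContinuous Lraw _ hLbound with hLc
  have hker : (⊤ : Submodule ℂ C(Tc, ℂ)) ≤ LinearMap.ker (Lc : C(Tc, ℂ) →ₗ[ℂ] ℂ) := by
    rw [← span_fourier_closure_eq_top]
    apply Submodule.topologicalClosure_minimal
    · rw [Submodule.span_le]
      rintro _ ⟨n, rfl⟩
      rw [SetLike.mem_coe, LinearMap.mem_ker]
      exact hF n
    · exact ContinuousLinearMap.isClosed_ker _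
  have hC : ∀ f : C(Tc, ℂ), ∫ x, f x * v x ∂muh = 0 := fun f =>
    LinearMap.mem_ker.mp (hker Submodule.mem_top)
  have hR : ∀ g : C(Tc, ℝ), ∫ x, g x * w x ∂muh = 0 := by
    intro g
    have hgc : Continuous fun x : Tc => ((g x : ℝ) : ℂ) :=
      Complex.continuous_ofReal.comp g.continuous
    have h0 := hC ⟨fun x => ((g x : ℝ) : ℂ), hgc⟩
    have hre : (fun x => ((g x : ℝ) : ℂ) * v x) = fun x => (((g x * w x : ℝ)) : ℂ) := by
      funext x
      simp only [hvdef]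
      push_cast
      ring
    rw [ContinuousMap.coe_mk] at h0
    have hcast : (∫ x, (((g x * w x : ℝ)) : ℂ) ∂muh) = ((∫ x, g x * w x ∂muh : ℝ) : ℂ) :=
      integral_ofReal
    rw [hre, hcast] at h0
    exact_mod_cast h0
  have hae := ae_zero_of_forall_contMap w hwm hw hR
  have haenorm : ∀ᵐ x ∂muh, ‖(θ : Tc → ℂ) x‖ ^ 2 = c := by
    filter_upwards [hae] with x hx
    have hx' : ‖(θ : Tc → ℂ) x‖ ^ 2 - c = 0 := hx
    linarith
  have hbound : ∀ᵐ x ∂muh, ‖(θ : Tc → ℂ) x‖ ≤ Real.sqrt c := by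
    filter_upwards [haenorm] with x hx
    rw [← Real.sqrt_sq (norm_nonneg ((θ : Tc → ℂ) x)), hx]
  have hmem : MemLp (θ : Tc → ℂ) ⊤ muh :=
    memLp_top_of_bound (Lp.aestronglyMeasurable θ) _ hbound
  set ψ₂ : Linf := hmem.toLp _ with hψ₂def
  have hψ₂coe : (ψ₂ : Tc → ℂ) =ᵐ[muh] (θ : Tc → ℂ) := hmem.coeFn_toLp
  have hψ₂L2 : toL2 ψ₂ = θ := Lp.ext ((coeFn_toL2 ψ₂).trans hψ₂coe)
  set ψ₁ : Linf := φ * ψ₂ with hψ₁def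
  have hψ₁coe : (ψ₁ : Tc → ℂ) =ᵐ[muh] fun x => (φ : Tc → ℂ) x * (ψ₂ : Tc → ℂ) x := by
    have hre : ψ₁ = (memLpTop_mul φ ψ₂).toLp _ := rfl
    rw [hre]
    filter_upwards [(memLpTop_mul φ ψ₂).coeFn_toLp] with x hx
    simpa using hx
  have hψ₁L2 : toL2 ψ₁ = Mmul φ θ := by
    apply Lp.ext
    filter_upwards [coeFn_toL2 ψ₁, hψ₁coe, hψ₂coe, coeFn_Mmul φ θ] with x h1 h2 h3 h4
    rw [h1, h2, h3, h4]
  obtain ⟨hθH2, hθcom⟩ := Submodule.mem_inf.mp hθK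
  have hψ₂ne : ∀ᵐ x ∂muh, (ψ₂ : Tc → ℂ) x ≠ 0 := by
    filter_upwards [hψ₂coe, haenorm] with x h1 h2
    rw [h1]
    intro h0
    rw [h0, norm_zero] at h2
    simp at h2
    linarith
  refine ⟨ψ₁, ψ₂, ?_, ?_, hψ₂ne, ?_⟩
  · show toL2 ψ₁ ∈ H2
    rw [hψ₁L2]
    simpa [Submodule.mem_comap] using hθcom
  · show toL2 ψ₂ ∈ H2
    rw [hψ₂L2]
    exact hθH2
  · filter_upwards [hψ₁coe, hψ₂ne] with x h1 h2
    rw [h1, mul_div_cancel_right₀ _ h2]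

end HankAux

/-- for `φ ∈ L^∞ \ H^∞`, `φ` is of bounded type iff `ker H_φ ≠ {0}`. -/
theorem boundedType_iff_hankel_ker_nontrivial (φ : Linf) (hφ : toL2 φ ∉ H2) :
    BoundedType φ ↔ LinearMap.ker (Hank φ : ↥H2 →ₗ[ℂ] L2) ≠ ⊥ := by
  open HankAux in
  constructor
  · rintro ⟨ψ₁, ψ₂, h1, h2, hne, heq⟩
    rw [Submodule.ne_bot_iff]
    have hmul : Mmul φ (toL2 ψ₂) = toL2 ψ₁ := by
      apply Lp.ext
      filter_upwards [coeFn_Mmul φ (toL2 ψ₂), coeFn_toL2 ψ₂, coeFn_toL2 ψ₁, hne, heq]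
        with x hx1 hx2 hx3 hx4 hx5
      rw [hx1, hx2, hx3, hx5, div_mul_cancel₀ _ hx4]
    refine ⟨⟨toL2 ψ₂, h2⟩, ?_, ?_⟩
    · rw [LinearMap.mem_ker]
      show Jop (PperpL (Mmul φ (H2.subtypeL ⟨toL2 ψ₂, h2⟩))) = 0
      have hsub : H2.subtypeL (⟨toL2 ψ₂, h2⟩ : ↥H2) = toL2 ψ₂ := rfl
      rw [hsub, hmul, (PperpL_eq_zero_iff _).mpr h1, map_zero]
    · intro h0
      have hz : toL2 ψ₂ = 0 := by
        simpa using congrArg (Subtype.val) h0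
      have hz' : (toL2 ψ₂ : Tc → ℂ) =ᵐ[muh] 0 := hz ▸ Lp.coeFn_zero ℂ 2 muh
      have hcontra : ∀ᵐ x ∂muh, False := by
        filter_upwards [(coeFn_toL2 ψ₂).symm.trans hz', hne] with x hx1 hx2
        exact hx2 (by simpa using hx1)
      have hne0 : (muh : Measure Tc) ≠ 0 := IsProbabilityMeasure.ne_zero muh
      exact (MeasureTheory.ae_neBot.mpr hne0).ne (by simpa using hcontra)
  · intro hker
    apply exists_psi φ
    rw [Submodule.ne_bot_iff] at hker ⊢
    obtain ⟨g, hgker, hg0⟩ := hker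
    rw [LinearMap.mem_ker] at hgker
    have h1 : Jop (PperpL (Mmul φ (↑g : L2))) = 0 := hgker
    have h3 : Mmul φ (↑g : L2) ∈ H2 := (PperpL_eq_zero_iff _).mp ((Jop_eq_zero_iff _).mp h1)
    refine ⟨(↑g : L2), Submodule.mem_inf.mpr ⟨g.2, ?_⟩, by simpa using hg0⟩
    simpa [Submodule.mem_comap] using h3
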